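/- Let θ be an invertible antisymmetric real 4×4 matrix, g a symmetric positive definite real 4×4 matrix, e^σ := √(det θ · det g), G := e^{−σ} θ g θᵀ, and ω := θ⁻¹. Then ω is self-dual or anti-self-dual with respect to g (i.e. ⋆_g ω = ω or ⋆_g ω = −ω) if and only if G = g⁻¹, i.e. the effective metric G_{μν} equals the induced metric g_{μν}. -/

import Mathlib

open Matrix

/-- The Levi-Civita symbol on `{0,1,2,3}` with `ε_{0123} = 1`. -/
noncomputable def levicivita (i j k l : Fin 4) : ℝ :=
  ((((j : ℤ) - (i : ℤ)) * ((k : ℤ) - (i : ℤ)) * ((l : ℤ) - (i : ℤ)) *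
    ((k : ℤ) - (j : ℤ)) * ((l : ℤ) - (j : ℤ)) * ((l : ℤ) - (k : ℤ)) : ℤ) : ℝ) / 12

/-- The Hodge dual of an antisymmetric 2-form `ω_{μν}` with respect to a metric `g_{μν}`:
`(⋆_g ω)_{μν} = (1/2)·√(det g)·ε_{μναβ} g^{αρ} g^{βτ} ω_{ρτ}`. -/
noncomputable def hodgeDual (g ω : Matrix (Fin 4) (Fin 4) ℝ) : Matrix (Fin 4) (Fin 4) ℝ :=
  Matrix.of fun μ ν => (1 / 2) * Real.sqrt g.det *
    ∑ α, ∑ β, ∑ ρ, ∑ τ, levicivita μ ν α β * g⁻¹ α ρ * g⁻¹ β τ * ω ρ τ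

noncomputable def dd (A : Matrix (Fin 4) (Fin 4) ℝ) : Matrix (Fin 4) (Fin 4) ℝ :=
  Matrix.of fun μ ν => (1 / 2) * ∑ α, ∑ β, levicivita μ ν α β * A α β

def pfn (A : Matrix (Fin 4) (Fin 4) ℝ) : ℝ :=
  A 0 1 * A 2 3 - A 0 2 * A 1 3 + A 0 3 * A 1 2

lemma eta4 (A : Matrix (Fin 4) (Fin 4) ℝ) :
    A = !![A 0 0, A 0 1, A 0 2, A 0 3;
           A 1 0, A 1 1, A 1 2, A 1 3;
           A 2 0, A 2 1, A 2 2, A 2 3;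
           A 3 0, A 3 1, A 3 2, A 3 3] := by
  ext i j
  fin_cases i <;> fin_cases j <;> rfl

set_option maxHeartbeats 1000000 in
lemma dd_eq (A : Matrix (Fin 4) (Fin 4) ℝ) :
    dd A = !![0, 1/2*(A 2 3 - A 3 2), 1/2*(A 3 1 - A 1 3), 1/2*(A 1 2 - A 2 1);
              1/2*(A 3 2 - A 2 3), 0, 1/2*(A 0 3 - A 3 0), 1/2*(A 2 0 - A 0 2);
              1/2*(A 1 3 - A 3 1), 1/2*(A 3 0 - A 0 3), 0, 1/2*(A 0 1 - A 1 0);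
              1/2*(A 2 1 - A 1 2), 1/2*(A 0 2 - A 2 0), 1/2*(A 1 0 - A 0 1), 0] := by
  ext i j
  fin_cases i <;> fin_cases j <;>
    · simp [dd, Fin.sum_univ_four]
      norm_num [levicivita, show ((0:Fin 4):ℤ) = 0 from rfl, show ((1:Fin 4):ℤ) = 1 from rfl,
        show ((2:Fin 4):ℤ) = 2 from rfl, show ((3:Fin 4):ℤ) = 3 from rfl]
      try ring

lemma dd_mul_aux (a b c d e f : ℝ) :
    !![0, f, -e, d; -f, 0, c, -b; e, -c, 0, a; -d, b, -a, 0] *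
      !![0, a, b, c; -a, 0, d, e; -b, -d, 0, f; -c, -e, -f, 0] =
    (-(a*f - b*e + c*d)) • (1 : Matrix (Fin 4) (Fin 4) ℝ) := by
  ext i j
  fin_cases i <;> fin_cases j <;>
    · simp [Matrix.mul_apply, Fin.sum_univ_four, Matrix.one_apply]
      ring

lemma det_aux (a b c d e f : ℝ) :
    (!![0, a, b, c; -a, 0, d, e; -b, -d, 0, f; -c, -e, -f, 0] :
      Matrix (Fin 4) (Fin 4) ℝ).det = (a*f - b*e + c*d)^2 := by
  simp [Matrix.det_succ_row_zero, Fin.sum_univ_succ, Fin.succAbove,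
    show (Fin.castSucc 2 : Fin 4) = 2 from rfl]
  ring

lemma antisym_facts (A : Matrix (Fin 4) (Fin 4) ℝ) (h : Aᵀ = -A) :
    A = !![0, A 0 1, A 0 2, A 0 3;
           -(A 0 1), 0, A 1 2, A 1 3;
           -(A 0 2), -(A 1 2), 0, A 2 3;
           -(A 0 3), -(A 1 3), -(A 2 3), 0] := by
  have k : ∀ i j, A j i = -A i j := by
    intro i j
    have := congrFun (congrFun h i) j
    simpa [Matrix.transpose_apply] using this
  have h00 : A 0 0 = 0 := by have := k 0 0; linarith
  have h11 : A 1 1 = 0 := by have := k 1 1; linarith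
  have h22 : A 2 2 = 0 := by have := k 2 2; linarith
  have h33 : A 3 3 = 0 := by have := k 3 3; linarith
  conv_lhs => rw [eta4 A]
  rw [h00, h11, h22, h33, k 0 1, k 0 2, k 0 3, k 1 2, k 1 3, k 2 3]

lemma dd_antisym_eq (A : Matrix (Fin 4) (Fin 4) ℝ) (h : Aᵀ = -A) :
    dd A = !![0, A 2 3, -(A 1 3), A 1 2;
              -(A 2 3), 0, A 0 3, -(A 0 2);
              A 1 3, -(A 0 3), 0, A 0 1;
              -(A 1 2), A 0 2, -(A 0 1), 0] := by
  have k : ∀ i j, A j i = -A i j := by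
    intro i j
    have := congrFun (congrFun h i) j
    simpa [Matrix.transpose_apply] using this
  rw [dd_eq A, k 0 1, k 0 2, k 0 3, k 1 2, k 1 3, k 2 3]
  ext i j
  fin_cases i <;> fin_cases j <;>
    · simp
      try ring

lemma dd_mul (A : Matrix (Fin 4) (Fin 4) ℝ) (h : Aᵀ = -A) :
    dd A * A = (-pfn A) • (1 : Matrix (Fin 4) (Fin 4) ℝ) := by
  obtain ⟨a, ha⟩ : ∃ x, A 0 1 = x := ⟨_, rfl⟩
  obtain ⟨b, hb⟩ : ∃ x, A 0 2 = x := ⟨_, rfl⟩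
  obtain ⟨c, hc⟩ : ∃ x, A 0 3 = x := ⟨_, rfl⟩
  obtain ⟨d, hd⟩ : ∃ x, A 1 2 = x := ⟨_, rfl⟩
  obtain ⟨e, he⟩ : ∃ x, A 1 3 = x := ⟨_, rfl⟩
  obtain ⟨f, hf⟩ : ∃ x, A 2 3 = x := ⟨_, rfl⟩
  have hpfn : pfn A = a*f - b*e + c*d := by rw [pfn, ha, hb, hc, hd, he, hf]
  have hAe := antisym_facts A h
  have hdd := dd_antisym_eq A h
  rw [ha, hb, hc, hd, he, hf] at hAe hdd
  rw [hpfn, hdd]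
  conv_lhs => rw [hAe]
  exact dd_mul_aux a b c d e f

lemma det_pf (A : Matrix (Fin 4) (Fin 4) ℝ) (h : Aᵀ = -A) :
    A.det = pfn A ^ 2 := by
  obtain ⟨a, ha⟩ : ∃ x, A 0 1 = x := ⟨_, rfl⟩
  obtain ⟨b, hb⟩ : ∃ x, A 0 2 = x := ⟨_, rfl⟩
  obtain ⟨c, hc⟩ : ∃ x, A 0 3 = x := ⟨_, rfl⟩
  obtain ⟨d, hd⟩ : ∃ x, A 1 2 = x := ⟨_, rfl⟩
  obtain ⟨e, he⟩ : ∃ x, A 1 3 = x := ⟨_, rfl⟩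
  obtain ⟨f, hf⟩ : ∃ x, A 2 3 = x := ⟨_, rfl⟩
  have hpfn : pfn A = a*f - b*e + c*d := by rw [pfn, ha, hb, hc, hd, he, hf]
  have hAe := antisym_facts A h
  rw [ha, hb, hc, hd, he, hf] at hAe
  rw [hpfn]
  conv_lhs => rw [hAe]
  exact det_aux a b c d e f

lemma pfn_smul (r : ℝ) (A : Matrix (Fin 4) (Fin 4) ℝ) :
    pfn (r • A) = r^2 * pfn A := by
  simp [pfn, Matrix.smul_apply, smul_eq_mul]
  ring


set_option maxHeartbeats 2000000 in
lemma hodge_eq (g ω : Matrix (Fin 4) (Fin 4) ℝ) (hgi : (g⁻¹)ᵀ = g⁻¹) :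
    hodgeDual g ω = Real.sqrt g.det • dd (g⁻¹ * ω * g⁻¹) := by
  have k : ∀ i j, g⁻¹ j i = g⁻¹ i j := by
    intro i j
    simpa using congrFun (congrFun hgi i) j
  ext μ ν
  simp only [hodgeDual, dd, Matrix.of_apply, Matrix.smul_apply, smul_eq_mul,
    Matrix.mul_apply, Fin.sum_univ_four, k 0 1, k 0 2, k 0 3, k 1 2, k 1 3, k 2 3]
  ring

set_option maxHeartbeats 1000000 in
/-- `ω = θ⁻¹` is (anti-)self-dual with respect to `g` iff the effective metric
`G = e^{-σ} θ g θᵀ` equals the induced metric, i.e. `G = g⁻¹`. -/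
theorem selfdual_iff_effective_eq_induced
    (θ g : Matrix (Fin 4) (Fin 4) ℝ)
    (hθ : θᵀ = -θ) (hθu : IsUnit θ) (hg : g.PosDef) :
    (hodgeDual g θ⁻¹ = θ⁻¹ ∨ hodgeDual g θ⁻¹ = -θ⁻¹) ↔
      (Real.sqrt (θ.det * g.det))⁻¹ • (θ * g * θᵀ) = g⁻¹ := by
  have hgdet : (0:ℝ) < g.det := hg.det_pos
  have hθdet : IsUnit θ.det := (Matrix.isUnit_iff_isUnit_det θ).mp hθu
  have hθd0 : θ.det ≠ 0 := hθdet.ne_zero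
  have hdetpf : θ.det = pfn θ ^ 2 := det_pf θ hθ
  have hpf0 : pfn θ ≠ 0 := by
    intro h0
    rw [hdetpf, h0] at hθd0
    simp at hθd0
  have hgu : IsUnit g.det := isUnit_iff_ne_zero.mpr (ne_of_gt hgdet)
  set s : ℝ := Real.sqrt g.det with hs
  have hspos : 0 < s := Real.sqrt_pos.mpr hgdet
  set t : ℝ := Real.sqrt (θ.det * g.det) with htdef
  have hdgpos : (0:ℝ) < θ.det * g.det := by
    have : (0:ℝ) < θ.det := by rw [hdetpf]; positivity
    positivity
  have htpos : 0 < t := Real.sqrt_pos.mpr hdgpos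
  have ht2 : t^2 = θ.det * g.det := Real.sq_sqrt (le_of_lt hdgpos)
  have hts : t = |pfn θ| * s := by
    rw [htdef, hdetpf, Real.sqrt_mul (sq_nonneg _), Real.sqrt_sq_eq_abs]
  have hgg : g⁻¹ * g = 1 := Matrix.nonsing_inv_mul g hgu
  have hgg' : g * g⁻¹ = 1 := Matrix.mul_nonsing_inv g hgu
  have hθθ : θ⁻¹ * θ = 1 := Matrix.nonsing_inv_mul θ hθdet
  have hθθ' : θ * θ⁻¹ = 1 := Matrix.mul_nonsing_inv θ hθdet
  have hgsym : gᵀ = g := hg.1.eq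
  have hgisym : (g⁻¹)ᵀ = g⁻¹ := by rw [Matrix.transpose_nonsing_inv, hgsym]
  have hθiT : (θ⁻¹)ᵀ = -θ⁻¹ := by
    rw [Matrix.transpose_nonsing_inv, hθ]
    exact Matrix.inv_eq_right_inv (by rw [Matrix.neg_mul, Matrix.mul_neg, neg_neg, hθθ'])
  set M : Matrix (Fin 4) (Fin 4) ℝ := g⁻¹ * θ⁻¹ * g⁻¹ with hM
  have hMT : Mᵀ = -M := by
    rw [hM, Matrix.transpose_mul, Matrix.transpose_mul, hgisym, hθiT]
    simp [Matrix.mul_neg, Matrix.neg_mul, Matrix.mul_assoc]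
  have hMrinv : M * (g * θ * g) = 1 := by
    simp only [hM, Matrix.mul_assoc]
    rw [Matrix.nonsing_inv_mul_cancel_left g (θ * g) hgu,
        Matrix.nonsing_inv_mul_cancel_left θ g hθdet]
    exact hgg
  have hH : hodgeDual g θ⁻¹ = (-(s * pfn M)) • (g * θ * g) := by
    have h1 : dd M * M = (-pfn M) • (1 : Matrix (Fin 4) (Fin 4) ℝ) := dd_mul M hMT
    have h2 : dd M = (-pfn M) • (g * θ * g) := by
      have e := congrArg (fun X => dd M * X) hMrinv
      simp only [Matrix.mul_one] at e
      rw [← Matrix.mul_assoc, h1, Matrix.smul_mul, Matrix.one_mul] at e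
      exact e.symm
    rw [hodge_eq g θ⁻¹ hgisym, ← hM, h2, smul_smul]
    congr 1
    ring
  set k : ℝ := -(s * pfn M) with hk
  have forward : ∀ ε : ℝ, ε = 1 ∨ ε = -1 → hodgeDual g θ⁻¹ = ε • θ⁻¹ →
      t⁻¹ • (θ * g * θᵀ) = g⁻¹ := by
    intro ε hε H
    rw [hH] at H
    have h2 : k • (θ * (g * (θ * g))) = ε • (1 : Matrix (Fin 4) (Fin 4) ℝ) := by
      have h2' := congrArg (fun X => θ * X) H
      simp only [Matrix.mul_smul, hθθ'] at h2'
      simpa only [Matrix.mul_assoc] using h2'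
    have hk0 : k ≠ 0 := by
      intro h0
      rw [h0, zero_smul] at h2
      have h3 := congrFun (congrFun h2 0) 0
      simp only [Matrix.zero_apply, Matrix.smul_apply, Matrix.one_apply_eq, smul_eq_mul,
        mul_one] at h3
      rcases hε with rfl | rfl <;> norm_num at h3
    set c : ℝ := k⁻¹ * ε with hcdef
    have h3 : θ * (g * (θ * g)) = c • (1 : Matrix (Fin 4) (Fin 4) ℝ) := by
      have h3' := congrArg (fun X => k⁻¹ • X) h2
      simp only [smul_smul, inv_mul_cancel₀ hk0, one_smul] at h3'
      exact h3'
    have h3'' : (θ * (g * θ)) * g = c • (1 : Matrix (Fin 4) (Fin 4) ℝ) := by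
      simpa only [Matrix.mul_assoc] using h3
    have h4 : θ * (g * θ) = c • g⁻¹ := by
      calc θ * (g * θ) = (θ * (g * θ)) * g * g⁻¹ :=
            (Matrix.mul_nonsing_inv_cancel_right _ _ hgu).symm
        _ = (c • (1 : Matrix (Fin 4) (Fin 4) ℝ)) * g⁻¹ := by rw [h3'']
        _ = c • g⁻¹ := by rw [Matrix.smul_mul, Matrix.one_mul]
    set x : Fin 4 → ℝ := ![1,0,0,0] with hxdef
    have hx : x ≠ 0 := by
      intro h0
      have := congrFun h0 0
      simp [hxdef] at this
    have hy0 : θ *ᵥ x ≠ 0 := by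
      intro h0
      apply hx
      have h1 := congrArg (fun v => θ⁻¹ *ᵥ v) h0
      simpa [Matrix.mulVec_mulVec, hθθ, Matrix.one_mulVec, Matrix.mulVec_zero] using h1
    have hql : x ⬝ᵥ ((θ * (g * θ)) *ᵥ x) = -((θ *ᵥ x) ⬝ᵥ (g *ᵥ (θ *ᵥ x))) := by
      have hv : x ᵥ* θ = -(θ *ᵥ x) := by
        have h1 := Matrix.vecMul_transpose θᵀ x
        rw [Matrix.transpose_transpose, hθ, Matrix.neg_mulVec] at h1
        exact h1
      rw [← Matrix.mulVec_mulVec, Matrix.dotProduct_mulVec, hv, neg_dotProduct,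
        Matrix.mulVec_mulVec]
    have hq1 : 0 < (θ *ᵥ x) ⬝ᵥ (g *ᵥ (θ *ᵥ x)) := by
      have := hg.dotProduct_mulVec_pos hy0
      simpa using this
    have hq2 : 0 < x ⬝ᵥ (g⁻¹ *ᵥ x) := by
      have := hg.inv.dotProduct_mulVec_pos hx
      simpa using this
    have hcneg : c < 0 := by
      have he : x ⬝ᵥ ((θ * (g * θ)) *ᵥ x) = c * (x ⬝ᵥ (g⁻¹ *ᵥ x)) := by
        rw [h4, Matrix.smul_mulVec, dotProduct_smul, smul_eq_mul]
      rw [hql] at he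
      nlinarith
    have hc4 : c^4 = t^4 := by
      have hd := congrArg Matrix.det h3
      rw [Matrix.det_mul, Matrix.det_mul, Matrix.det_mul, Matrix.det_smul, Matrix.det_one] at hd
      simp only [Fintype.card_fin, mul_one] at hd
      have ht4 : t^4 = (θ.det * g.det)^2 := by rw [show t^4 = (t^2)^2 from by ring, ht2]
      rw [ht4]
      nlinarith [hd]
    have hceq : c = -t := by
      have h5 : (c^2 - t^2) * (c^2 + t^2) = 0 := by linear_combination hc4
      have hc2 : c^2 = t^2 := by
        rcases mul_eq_zero.mp h5 with h6 | h6
        · linarith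
        · nlinarith
      have h7 : (c - t) * (c + t) = 0 := by linear_combination hc2
      rcases mul_eq_zero.mp h7 with h8 | h8
      · nlinarith
      · linarith
    have h6 : θ * g * θᵀ = t • g⁻¹ := by
      rw [hθ, Matrix.mul_neg, Matrix.mul_assoc, h4, hceq]
      rw [neg_smul, neg_neg]
    rw [h6, smul_smul, inv_mul_cancel₀ (ne_of_gt htpos), one_smul]
  constructor
  · rintro (H | H)
    · exact forward 1 (Or.inl rfl) (by simpa using H)
    · exact forward (-1) (Or.inr rfl) (by simpa [neg_smul] using H)
  · intro H
    have h6 : θ * g * θᵀ = t • g⁻¹ := by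
      have h6' := congrArg (fun X => t • X) H
      simpa [smul_smul, mul_inv_cancel₀ (ne_of_gt htpos), one_smul] using h6'
    have h4 : θ * (g * θ) = (-t) • g⁻¹ := by
      rw [hθ, Matrix.mul_neg, Matrix.mul_assoc] at h6
      have h6'' := congrArg Neg.neg h6
      simp only [neg_neg] at h6''
      rw [h6'', neg_smul]
    have h3 : θ * (g * (θ * g)) = (-t) • (1 : Matrix (Fin 4) (Fin 4) ℝ) := by
      have h3' := congrArg (fun X => X * g) h4
      simp only [Matrix.smul_mul, Matrix.mul_assoc, hgg, Matrix.mul_one] at h3'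
      exact h3'
    have hθinv : θ⁻¹ = (-t⁻¹) • (g * θ * g) := by
      apply Matrix.inv_eq_right_inv
      rw [Matrix.mul_smul]
      rw [show θ * (g * θ * g) = θ * (g * (θ * g)) from by
        simp only [Matrix.mul_assoc], h3, smul_smul]
      rw [show (-t⁻¹) * (-t) = t⁻¹ * t from by ring, inv_mul_cancel₀ (ne_of_gt htpos), one_smul]
    have hgθg : g * θ * g = (-t) • θ⁻¹ := by
      rw [hθinv, smul_smul, show (-t) * (-t⁻¹) = t * t⁻¹ from by ring,
        mul_inv_cancel₀ (ne_of_gt htpos), one_smul]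
    have hMval : M = (-t⁻¹) • θ := by
      rw [hM, hθinv, Matrix.mul_smul, Matrix.smul_mul]
      congr 1
      simp only [Matrix.mul_assoc]
      rw [Matrix.nonsing_inv_mul_cancel_left g _ hgu, hgg', Matrix.mul_one]
    have hpfM : pfn M = t⁻¹^2 * pfn θ := by
      rw [hMval, pfn_smul]
      ring
    rw [hH, hgθg, hk, hpfM, smul_smul]
    have hco : (-(s * (t⁻¹^2 * pfn θ))) * (-t) = s * pfn θ / t := by
      field_simp
    rw [hco]
    rcases lt_or_gt_of_ne hpf0 with hneg | hpos
    · right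
      have hval : s * pfn θ / t = -1 := by
        rw [hts, abs_of_neg hneg]
        field_simp
      rw [hval, neg_smul, one_smul]
    · left
      have hval : s * pfn θ / t = 1 := by
        rw [hts, abs_of_pos hpos]
        field_simp
      rw [hval, one_smul]
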